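/- Let F be C¹ strictly convex on a convex open set U ⊆ ℝ^d. Fix ξ ∈ U and a unit vector v. Then the map t ↦ φ_F(ξ, ξ + t v), defined on the interval of t for which ξ + t v ∈ U, is strictly decreasing for t ≤ 0 and strictly increasing for t ≥ 0. -/

import Mathlib

open scoped InnerProductSpace

noncomputable def bregman {d : ℕ} (F : EuclideanSpace ℝ (Fin d) → ℝ)
    (f : EuclideanSpace ℝ (Fin d) → EuclideanSpace ℝ (Fin d))
    (ξ x : EuclideanSpace ℝ (Fin d)) : ℝ :=
  F ξ - F x - ⟪f x, ξ - x⟫_ℝ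

lemma subgrad_strict {d : ℕ} {U : Set (EuclideanSpace ℝ (Fin d))}
    {F : EuclideanSpace ℝ (Fin d) → ℝ}
    {f : EuclideanSpace ℝ (Fin d) → EuclideanSpace ℝ (Fin d)}
    (hgrad : ∀ x ∈ U, HasGradientAt F (f x) x)
    (hconv : StrictConvexOn ℝ U F)
    {x y : EuclideanSpace ℝ (Fin d)} (hx : x ∈ U) (hy : y ∈ U) (hxy : x ≠ y) :
    F x + ⟪f x, y - x⟫_ℝ < F y := by
  set L : ℝ → EuclideanSpace ℝ (Fin d) := fun t => x + t • (y - x) with hL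
  have hLinj : Function.Injective L := by
    intro s t hst
    have : s • (y - x) = t • (y - x) := by
      have := hst; simpa [hL, add_right_cancel_iff] using this
    have hyx : y - x ≠ 0 := sub_ne_zero.2 (Ne.symm hxy)
    exact smul_left_injective ℝ hyx this
  set S : Set ℝ := L ⁻¹' U with hS
  have hSconv : Convex ℝ S := by
    intro s hs t ht a b ha hb hab
    have : L (a * s + b * t) = a • L s + b • L t := by
      simp only [hL]
      have hb' : b = 1 - a := by linarith
      subst hb'
      module
    have := hconv.1 hs ht ha hb hab
    simpa [hS, Set.mem_preimage, ‹L (a * s + b * t) = _›, smul_smul] using this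
  have hg : StrictConvexOn ℝ S (F ∘ L) := by
    refine ⟨hSconv, fun s hs t ht hst a b ha hb hab => ?_⟩
    have hLst : L s ≠ L t := fun h => hst (hLinj h)
    have key : L (a * s + b * t) = a • L s + b • L t := by
      simp only [hL]
      have hb' : b = 1 - a := by linarith
      subst hb'
      module
    have := hconv.2 hs ht hLst ha hb hab
    simpa [Function.comp, key, smul_eq_mul] using this
  have h0 : (0 : ℝ) ∈ S := by simp [hS, hL, hx]
  have h1 : (1 : ℝ) ∈ S := by simp [hS, hL, hy]
  have hLd : HasDerivAt L (y - x) 0 := by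
    simpa [hL] using ((hasDerivAt_id (0:ℝ)).smul_const (y - x)).const_add x
  have hFd : HasFDerivAt F (InnerProductSpace.toDual ℝ _ (f x)) x :=
    (hasGradientAt_iff_hasFDerivAt.mp (hgrad x hx))
  have hcomp : HasDerivAt (F ∘ L) ⟪f x, y - x⟫_ℝ 0 := by
    have hL0 : L 0 = x := by simp [hL]
    have hFd' : HasFDerivAt F (InnerProductSpace.toDual ℝ _ (f x)) (L 0) := hL0 ▸ hFd
    have h := hFd'.comp_hasDerivAt 0 hLd
    simpa [InnerProductSpace.toDual_apply_apply] using h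
  have := hg.lt_slope_of_hasDerivAt h0 h1 one_pos hcomp
  rw [slope_def_field] at this
  simp only [Function.comp, hL, zero_smul, add_zero, one_smul, add_sub_cancel,
    sub_zero, div_one] at this
  linarith [this]

theorem stmt_7 {d : ℕ} (U : Set (EuclideanSpace ℝ (Fin d)))
    (hUopen : IsOpen U) (hUconv : Convex ℝ U)
    (F : EuclideanSpace ℝ (Fin d) → ℝ)
    (f : EuclideanSpace ℝ (Fin d) → EuclideanSpace ℝ (Fin d))
    (hF : ContDiffOn ℝ 1 F U)
    (hgrad : ∀ x ∈ U, HasGradientAt F (f x) x)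
    (hconv : StrictConvexOn ℝ U F)
    (ξ : EuclideanSpace ℝ (Fin d)) (hξ : ξ ∈ U)
    (v : EuclideanSpace ℝ (Fin d)) (hv : ‖v‖ = 1) :
    ∀ s t : ℝ, ξ + s • v ∈ U → ξ + t • v ∈ U →
      (s < t → t ≤ 0 →
        bregman F f ξ (ξ + t • v) < bregman F f ξ (ξ + s • v)) ∧
      (0 ≤ s → s < t →
        bregman F f ξ (ξ + s • v) < bregman F f ξ (ξ + t • v)) := by
  intro s t hs ht
  have hv0 : v ≠ 0 := by intro h; rw [h, norm_zero] at hv; norm_num at hv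
  -- common facts for s < t
  have key : s < t →
      ((t - s) * ⟪f (ξ + s • v), v⟫_ℝ < F (ξ + t • v) - F (ξ + s • v) ∧
       F (ξ + t • v) - F (ξ + s • v) < (t - s) * ⟪f (ξ + t • v), v⟫_ℝ) := by
    intro hst
    have hne : ξ + s • v ≠ ξ + t • v := by
      intro h
      have : s • v = t • v := by simpa [add_right_cancel_iff] using h
      have := smul_left_injective ℝ hv0 this
      exact absurd this (ne_of_lt hst)
    have hdiff1 : (ξ + t • v) - (ξ + s • v) = (t - s) • v := by module
    have hdiff2 : (ξ + s • v) - (ξ + t • v) = (s - t) • v := by module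
    have hA := subgrad_strict hgrad hconv hs ht hne
    have hB := subgrad_strict hgrad hconv ht hs hne.symm
    rw [hdiff1, real_inner_smul_right] at hA
    rw [hdiff2, real_inner_smul_right] at hB
    constructor
    · linarith
    · nlinarith [hB]
  have hbreg : ∀ r : ℝ, bregman F f ξ (ξ + r • v)
      = F ξ - F (ξ + r • v) + r * ⟪f (ξ + r • v), v⟫_ℝ := by
    intro r
    have : ξ - (ξ + r • v) = (-r) • v := by module
    rw [bregman, this, real_inner_smul_right]
    ring
  constructor
  · intro hst hts
    obtain ⟨hA, hB⟩ := key hst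
    set a := ⟪f (ξ + s • v), v⟫_ℝ
    set b := ⟪f (ξ + t • v), v⟫_ℝ
    have hab : a < b := by
      have h := hA.trans hB
      exact lt_of_mul_lt_mul_left (by linarith [h]) (by linarith : (0:ℝ) ≤ t - s)
    have htba : t * (b - a) ≤ 0 := mul_nonpos_of_nonpos_of_nonneg hts (by linarith)
    rw [hbreg s, hbreg t]
    nlinarith [hA, htba]
  · intro hs0 hst
    obtain ⟨hA, hB⟩ := key hst
    set a := ⟪f (ξ + s • v), v⟫_ℝ
    set b := ⟪f (ξ + t • v), v⟫_ℝ
    have hab : a < b := by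
      have h := hA.trans hB
      exact lt_of_mul_lt_mul_left (by linarith [h]) (by linarith : (0:ℝ) ≤ t - s)
    have hsba : 0 ≤ s * (b - a) := mul_nonneg hs0 (by linarith)
    rw [hbreg s, hbreg t]
    nlinarith [hB, hsba]
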